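/- Let K be a field of characteristic 0, V a K-vector space of finite dimension N ≥ 2, and n ≥ 1 an integer. For a ∈ V^{⊗n}, let β(a) : V → V^{⊗(n+1)} be the linear map v ↦ a⊗v − v⊗a. Then the map a ↦ β(a) from V^{⊗n} to Hom_K(V, V^{⊗(n+1)}) is injective, the first-factor partial trace S_n : Hom_K(V, V^{⊗(n+1)}) → V^{⊗n} is surjective, and Hom_K(V, V^{⊗(n+1)}) is the direct sum (internal) of the kernel of S_n and the image of β; in particular the kernel of S_n is a complement of the restrictions of inner derivations in tensor degree n. -/

import Mathlib

open scoped TensorProduct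

/-- Let `V` be a vector space of finite dimension `N ≥ 2` over a field of characteristic
zero and `n ≥ 1`.  With `β a : v ↦ a⊗v − v⊗a` (restriction of the inner derivation
`ad_a`) and `S_n` the first-factor partial trace, the map `β` is injective, `S_n` is
surjective, and `Hom_K(V, V^{⊗(n+1)})` is the internal direct sum of `ker S_n` and
`range β`; in particular `ker S_n` is a complement of the restrictions of the inner
derivations in tensor degree `n`. -/
theorem kernel_partial_trace_complements_inner_derivations
    (K : Type*) [Field K] [CharZero K]
    (V : Type*) [AddCommGroup V] [Module K V] [Module.Finite K V]
    (N : ℕ) (hN : Module.finrank K V = N) (hN2 : 2 ≤ N)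
    (n : ℕ) (hn : 1 ≤ n)
    -- the map `a ↦ β a`, `β a : v ↦ a⊗v − v⊗a`
    (β : (⨂[K] (_ : Fin n), V) →ₗ[K] (V →ₗ[K] ⨂[K] (_ : Fin (n + 1)), V))
    (hβ : ∀ (w : Fin n → V) (v : V),
        β (PiTensorProduct.tprod K w) v
          = PiTensorProduct.tprod K (Fin.snoc w v)
            - PiTensorProduct.tprod K (Fin.cons v w))
    -- the first-factor partial trace `S_n`
    (S : (V →ₗ[K] ⨂[K] (_ : Fin (n + 1)), V) →ₗ[K] ⨂[K] (_ : Fin n), V)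
    (hS : ∀ (α : V →ₗ[K] K) (w : Fin (n + 1) → V),
        S (α.smulRight (PiTensorProduct.tprod K w))
          = α (w 0) • PiTensorProduct.tprod K (fun i : Fin n => w i.succ)) :
    Function.Injective ⇑β ∧
    Function.Surjective ⇑S ∧
    LinearMap.ker S ⊓ LinearMap.range β = ⊥ ∧
    LinearMap.ker S ⊔ LinearMap.range β = ⊤ := by
  classical
  obtain ⟨m, rfl⟩ : ∃ m, n = m + 1 := ⟨n - 1, by omega⟩
  clear hn
  set b := Module.finBasis K V with hb
  -- the cyclic rotation operator
  set Cc : (⨂[K] (_ : Fin (m+1)), V) →ₗ[K] (⨂[K] (_ : Fin (m+1)), V) :=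
    (PiTensorProduct.reindex K (fun _ : Fin (m+1) => V) (finRotate (m+1)).symm).toLinearMap
    with hCc
  have hC : ∀ w : Fin (m+1) → V,
      Cc (PiTensorProduct.tprod K w)
        = PiTensorProduct.tprod K (fun i => w (finRotate (m+1) i)) := by
    intro w
    simp [hCc]
  open Fin.NatCast Fin.CommRing in
  have hrotpow : ∀ (k : ℕ) (i : Fin (m+1)),
      ((finRotate (m+1)) ^ k) i = i + (k : Fin (m+1)) := by
    intro k
    induction k with
    | zero => intro i; simp
    | succ k ih =>
      intro i
      rw [pow_succ', Equiv.Perm.mul_apply, ih, finRotate_succ_apply]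
      push_cast
      ring
  have hCk : ∀ (k : ℕ) (w : Fin (m+1) → V),
      (Cc ^ k) (PiTensorProduct.tprod K w)
        = PiTensorProduct.tprod K (fun i => w (((finRotate (m+1)) ^ k) i)) := by
    intro k
    induction k with
    | zero => intro w; simp
    | succ k ih =>
      intro w
      rw [pow_succ, Module.End.mul_apply, hC, ih]
      congr 1
      funext i
      rw [pow_succ', Equiv.Perm.mul_apply]
  have hCpow : Cc ^ (m+1) = 1 := by
    apply PiTensorProduct.ext
    apply MultilinearMap.ext
    intro w
    simp only [LinearMap.compMultilinearMap_apply, hCk, Module.End.one_apply]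
    congr 1
    funext i
    rw [hrotpow, Fin.natCast_self, add_zero]
  -- decomposition of any linear map through the basis
  have hdecomp : ∀ f : V →ₗ[K] (⨂[K] (_ : Fin (m+1+1)), V),
      f = ∑ i, (b.coord i).smulRight (f (b i)) := by
    intro f
    ext v
    simp only [LinearMap.sum_apply, LinearMap.smulRight_apply, Module.Basis.coord_apply]
    conv_lhs => rw [← b.sum_repr v]
    rw [map_sum]
    simp [map_smul]
  have hsub : ∀ (α : V →ₗ[K] K) (x y : ⨂[K] (_ : Fin (m+1+1)), V),
      α.smulRight (x - y) = α.smulRight x - α.smulRight y := by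
    intro α x y
    ext v
    simp [smul_sub]
  -- the key computation: S ∘ β = Cc - N • id on pure tensors
  have key : ∀ w : Fin (m+1) → V,
      S (β (PiTensorProduct.tprod K w))
        = Cc (PiTensorProduct.tprod K w)
          - (N : K) • PiTensorProduct.tprod K w := by
    intro w
    have term : ∀ i, S ((b.coord i).smulRight (β (PiTensorProduct.tprod K w) (b i)))
        = b.coord i (w 0) • PiTensorProduct.tprod K
            (Fin.snoc (Fin.tail w) (b i) : Fin (m+1) → V)
          - b.coord i (b i) • PiTensorProduct.tprod K w := by
      intro i
      have h1 : (Fin.snoc w (b i) : Fin (m+2) → V) 0 = w 0 := by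
        have h0 : (0 : Fin (m+2)) = Fin.castSucc 0 := rfl
        rw [h0, Fin.snoc_castSucc]
      have h2 : (fun j : Fin (m+1) => (Fin.snoc w (b i) : Fin (m+2) → V) j.succ)
          = (Fin.snoc (Fin.tail w) (b i) : Fin (m+1) → V) := by
        funext j
        refine Fin.lastCases ?_ ?_ j
        · simp [Fin.succ_last]
        · intro j'
          rw [Fin.succ_castSucc, Fin.snoc_castSucc, Fin.snoc_castSucc, Fin.tail]
      have h3 : (Fin.cons (b i) w : Fin (m+2) → V) 0 = b i := Fin.cons_zero _ _
      have h4 : (fun j : Fin (m+1) => (Fin.cons (b i) w : Fin (m+2) → V) j.succ) = w := by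
        funext j
        exact Fin.cons_succ _ _ _
      rw [hβ, hsub, map_sub, hS, hS, h1, h2, h3, h4]
    rw [hdecomp (β (PiTensorProduct.tprod K w)), map_sum,
      Finset.sum_congr rfl (fun i _ => term i), Finset.sum_sub_distrib]
    -- the multilinear map in the last slot
    have φadd : ∀ x y : V,
        PiTensorProduct.tprod K (Fin.snoc (Fin.tail w) (x + y) : Fin (m+1) → V)
          = PiTensorProduct.tprod K (Fin.snoc (Fin.tail w) x : Fin (m+1) → V)
            + PiTensorProduct.tprod K (Fin.snoc (Fin.tail w) y : Fin (m+1) → V) :=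
      fun x y => MultilinearMap.snoc_add (M := fun _ : Fin (m+1) => V) (PiTensorProduct.tprod K) (Fin.tail w) x y
    have φsmul : ∀ (c : K) (x : V),
        PiTensorProduct.tprod K (Fin.snoc (Fin.tail w) (c • x) : Fin (m+1) → V)
          = c • PiTensorProduct.tprod K (Fin.snoc (Fin.tail w) x : Fin (m+1) → V) :=
      fun c x => MultilinearMap.snoc_smul (M := fun _ : Fin (m+1) => V) (PiTensorProduct.tprod K) (Fin.tail w) c x
    set φ : V →ₗ[K] (⨂[K] (_ : Fin (m+1)), V) :=
      { toFun := fun x => PiTensorProduct.tprod K (Fin.snoc (Fin.tail w) x : Fin (m+1) → V),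
        map_add' := φadd,
        map_smul' := φsmul } with hφ
    have hsum1 : ∑ i, b.coord i (w 0) • PiTensorProduct.tprod K
          (Fin.snoc (Fin.tail w) (b i) : Fin (m+1) → V)
        = Cc (PiTensorProduct.tprod K w) := by
      have e1 : ∀ i, b.coord i (w 0) • PiTensorProduct.tprod K
            (Fin.snoc (Fin.tail w) (b i) : Fin (m+1) → V)
          = φ (b.coord i (w 0) • b i) := by
        intro i
        rw [map_smul]
        rfl
      rw [Finset.sum_congr rfl (fun i _ => e1 i), ← map_sum]
      have e2 : ∑ i, b.coord i (w 0) • b i = w 0 := by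
        simp only [Module.Basis.coord_apply]
        exact b.sum_repr (w 0)
      rw [e2, hC]
      show PiTensorProduct.tprod K (Fin.snoc (Fin.tail w) (w 0) : Fin (m+1) → V) = _
      congr 1
      funext i
      refine Fin.lastCases ?_ ?_ i
      · simp [finRotate_last]
      · intro j
        simp only [Fin.snoc_castSucc, Fin.tail, finRotate_succ_apply]
        congr 1
        ext
        rw [Fin.val_add_one_of_lt (by exact Fin.castSucc_lt_last j)]
        simp
    have hsum2 : ∑ i, b.coord i (b i) • PiTensorProduct.tprod K w
        = (N : K) • PiTensorProduct.tprod K w := by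
      have e1 : ∀ i, b.coord i (b i) • PiTensorProduct.tprod K w
          = PiTensorProduct.tprod K w := by
        intro i
        simp
      rw [Finset.sum_congr rfl (fun i _ => e1 i), Finset.sum_const, Finset.card_univ,
        Fintype.card_fin, hN, ← Nat.cast_smul_eq_nsmul K]
    rw [hsum1, hsum2]
  have hT : S ∘ₗ β = Cc - (N : K) • LinearMap.id := by
    apply PiTensorProduct.ext
    apply MultilinearMap.ext
    intro w
    simp only [LinearMap.compMultilinearMap_apply, LinearMap.comp_apply, key,
      LinearMap.sub_apply, LinearMap.smul_apply, LinearMap.id_apply]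
  -- invertibility of S ∘ β
  set T : Module.End K (⨂[K] (_ : Fin (m+1)), V) := S ∘ₗ β with hTdef
  obtain ⟨q, hq⟩ := sub_dvd_pow_sub_pow (Polynomial.X : Polynomial K)
    (Polynomial.C ((N : K))) (m+1)
  set U : Module.End K (⨂[K] (_ : Fin (m+1)), V) := Polynomial.aeval Cc q with hU
  set c : K := 1 - (N : K)^(m+1) with hc
  have hcne : c ≠ 0 := by
    rw [hc, sub_ne_zero]
    intro h
    have h2 : ((1 : ℕ) : K) = ((N ^ (m+1) : ℕ) : K) := by push_cast; rw [h]
    have := Nat.cast_injective (R := K) h2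
    have hNpow : 2 ≤ N ^ (m+1) := le_trans hN2 (Nat.le_self_pow (by omega) N)
    omega
  have hTC : T = Cc - algebraMap K _ ((N : K)) := by
    rw [hT, Module.algebraMap_end_eq_smul_id]
  have h1 : (Cc - algebraMap K _ ((N : K))) * U = algebraMap K _ c := by
    have h0 := congrArg (Polynomial.aeval Cc) hq
    rw [map_mul, map_sub, map_pow, map_sub, Polynomial.aeval_X, Polynomial.aeval_C,
      hCpow, ← map_pow] at h0
    rw [hU, ← h0, hc, Polynomial.aeval_C, map_sub, map_one]
  have hcomm : Cc * U = U * Cc := by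
    have h0 := congrArg (Polynomial.aeval Cc) (mul_comm (Polynomial.X : Polynomial K) q)
    rw [map_mul, map_mul, Polynomial.aeval_X] at h0
    rw [hU, h0]
  have hTU : T * U = algebraMap K _ c := by rw [hTC, h1]
  have hUT : U * T = algebraMap K _ c := by
    rw [hTC, mul_sub, sub_mul, ← hcomm, Algebra.commutes] at *
    exact h1
  have hTapp : ∀ x, T x = S (β x) := fun x => rfl
  have hri : ∀ x, T (c⁻¹ • U x) = x := by
    intro x
    have h0 : T (U x) = c • x := by
      have := congrArg (fun f : Module.End K (⨂[K] (_ : Fin (m+1)), V) => f x) hTU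
      simpa [Module.algebraMap_end_apply] using this
    rw [map_smul, h0, smul_smul, inv_mul_cancel₀ hcne, one_smul]
  have hli : ∀ x, c⁻¹ • U (T x) = x := by
    intro x
    have h0 : U (T x) = c • x := by
      have := congrArg (fun f : Module.End K (⨂[K] (_ : Fin (m+1)), V) => f x) hUT
      simpa [Module.algebraMap_end_apply] using this
    rw [h0, smul_smul, inv_mul_cancel₀ hcne, one_smul]
  have hTinj : Function.Injective T := by
    intro x y hxy
    have := hli x
    rw [hxy, hli y] at this
    exact this.symm
  have hTsurj : Function.Surjective T := fun y => ⟨c⁻¹ • U y, hri y⟩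
  refine ⟨?_, ?_, ?_, ?_⟩
  · intro a a' h
    exact hTinj (by rw [hTapp, hTapp, h])
  · intro y
    obtain ⟨a, ha⟩ := hTsurj y
    exact ⟨β a, ha⟩
  · rw [eq_bot_iff]
    rintro x ⟨hker, a, rfl⟩
    have : T a = 0 := by rw [hTapp]; exact hker
    have ha : a = 0 := hTinj (by rw [this, map_zero])
    simp [ha]
  · rw [eq_top_iff]
    intro f _
    obtain ⟨a, ha⟩ := hTsurj (S f)
    have hmem1 : f - β a ∈ LinearMap.ker S := by
      rw [LinearMap.mem_ker, map_sub, ← hTapp, ha, sub_self]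
    have hmem2 : β a ∈ LinearMap.range β := ⟨a, rfl⟩
    have : f = (f - β a) + β a := by abel
    rw [this]
    exact Submodule.add_mem_sup hmem1 hmem2
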